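/- For all positive integers n and α with α < n and n ≥ 2α, the graph F(n,α) is connected, has independence number α, its subgraph F(n,α) − x_0 obtained by deleting the special cutvertex x_0 is isomorphic to G(n−1,α), and ♯α(F(n,α)) = f(n,α) = g(n−1,α) + (⌊n/α⌋−1)^{α−(n mod α)}·(⌈n/α⌉−1)^{(n mod α)−1}, where for α dividing n the last summand is interpreted as (n/α − 1)^{α−1}. -/

import Mathlib

open Finset

/-- A finset of vertices is independent in `G`: pairwise non-adjacent. -/
def IsIndepFinset {V : Type*} (G : SimpleGraph V) (s : Finset V) : Prop :=
  ∀ ⦃u⦄, u ∈ s → ∀ ⦃v⦄, v ∈ s → u ≠ v → ¬ G.Adj u v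

/-- The independence number of a finite graph. -/
noncomputable def indepNumber {V : Type*} [Fintype V] (G : SimpleGraph V) : ℕ :=
  sSup {k | ∃ s : Finset V, IsIndepFinset G s ∧ s.card = k}

/-- The number `♯α(G)` of maximum independent sets of `G`. -/
noncomputable def numMaxIndep {V : Type*} [Fintype V] (G : SimpleGraph V) : ℕ :=
  Set.ncard {s : Finset V | IsIndepFinset G s ∧ s.card = indepNumber G}

/-- The number `♯α(G,u)` of maximum independent sets of `G` containing `u`. -/
noncomputable def numMaxIndepOn {V : Type*} [Fintype V] (G : SimpleGraph V) (u : V) : ℕ :=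
  Set.ncard {s : Finset V | IsIndepFinset G s ∧ s.card = indepNumber G ∧ u ∈ s}

/-- `g(n,α) = ⌊n/α⌋^(α − n mod α) ⌈n/α⌉^(n mod α)`. -/
def gFun (n a : ℕ) : ℕ := (n / a) ^ (a - n % a) * ((n + a - 1) / a) ^ (n % a)

/-- `t(n,α) = ∏_{i=1}^{α−1} (|C_i| − 1)`, where `|C_i| = ⌊n/α⌋ + 1` for `i < n mod α`
and `|C_i| = ⌊n/α⌋` otherwise. -/
def tFun (n a : ℕ) : ℕ := ∏ i ∈ Finset.Ico 1 a, (n / a + (if i < n % a then 1 else 0) - 1)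

/-- `f(n,α) = g(n−1,α) + t(n,α)`. -/
def fFun (n a : ℕ) : ℕ := gFun (n - 1) a + tFun n a

/-- `G(n,α)`: complement of the Turán graph, i.e. the disjoint union of `α` cliques
(the residue classes mod `α`), each of order `⌈n/α⌉` or `⌊n/α⌋`. -/
def Ggraph (n a : ℕ) : SimpleGraph (Fin n) where
  Adj v w := v ≠ w ∧ v.val % a = w.val % a
  symm := by constructor; intro v w h; exact ⟨h.1.symm, h.2.symm⟩
  loopless := by constructor; intro v h; exact h.1 rfl

/-- `F(n,α)`: `G(n,α)` plus the edges `x₀x₁, …, x₀x_{α−1}`, where `x_i` is the vertex `i`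
of the clique `C_i` (the residue class of `i` mod `α`); `x₀ = 0` is the special cutvertex,
lying in the clique `C₀` of order `⌈n/α⌉`. -/
def Fgraph (n a : ℕ) : SimpleGraph (Fin n) where
  Adj v w := v ≠ w ∧
    (v.val % a = w.val % a ∨ (v.val = 0 ∧ w.val < a) ∨ (w.val = 0 ∧ v.val < a))
  symm := by constructor; intro v w h; exact ⟨h.1.symm, by tauto⟩
  loopless := by constructor; intro v h; exact h.1 rfl

/-! ### Auxiliary counting lemmas -/

lemma count_res (a i : ℕ) (hi : i < a) (n : ℕ) :
    ((Finset.range n).filter (fun v => v % a = i)).card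
      = n / a + if i < n % a then 1 else 0 := by
  have ha : 0 < a := by omega
  induction n with
  | zero => simp
  | succ n ih =>
    rw [Finset.range_add_one, Finset.filter_insert]
    have hq := Nat.div_add_mod n a
    have hq' := Nat.div_add_mod (n+1) a
    have hrlt := Nat.mod_lt n ha
    have hrlt' := Nat.mod_lt (n+1) ha
    have hqle : n / a ≤ (n+1)/a := Nat.div_le_div_right (by omega)
    have hqle' : (n+1)/a ≤ n/a + 1 := by
      have h1 : (n + a) / a = n / a + 1 := by rw [Nat.add_div_right _ ha]
      calc (n+1)/a ≤ (n+a)/a := Nat.div_le_div_right (by omega)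
        _ = n/a + 1 := h1
    set q := n / a with hqdef
    set r := n % a with hrdef
    set q' := (n+1)/a with hq'def
    set r' := (n+1)%a with hr'def
    have hcase : (q' = q ∧ r' = r + 1) ∨ (q' = q + 1 ∧ r' = 0 ∧ r = a - 1) := by
      rcases (by omega : q' = q ∨ q' = q + 1) with h | h
      · left
        refine ⟨h, ?_⟩
        have h2 : a * q + r' = a * q + r + 1 := by
          have h3 : a * q' = a * q := by rw [h]
          linarith [hq, hq']
        omega
      · right
        have h2 : a * q + a + r' = a * q + r + 1 := by
          have h3 : a * q' = a * q + a := by rw [h]; ring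
          linarith [hq, hq']
        omega
    by_cases hni : n % a = i
    · rw [if_pos hni, Finset.card_insert_of_notMem (by simp), ih]
      rcases hcase with ⟨h1, h2⟩ | ⟨h1, h2, h3⟩ <;> split_ifs <;> omega
    · rw [if_neg hni, ih]
      rcases hcase with ⟨h1, h2⟩ | ⟨h1, h2, h3⟩ <;> split_ifs <;> omega

lemma card_classC (n a : ℕ) (ha : 0 < a) (i : ℕ) (hi : i < a) :
    ((Finset.univ : Finset (Fin n)).filter (fun v => v.val % a = i)).card
      = n / a + if i < n % a then 1 else 0 := by
  have h : ((Finset.univ : Finset (Fin n)).filter (fun v => v.val % a = i)).card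
      = ((Finset.range n).filter (fun v => v % a = i)).card := by
    apply Finset.card_bij (fun v _ => v.val)
    · intro v hv
      simp only [Finset.mem_filter, Finset.mem_univ, true_and] at hv
      simp only [Finset.mem_filter, Finset.mem_range]
      exact ⟨v.isLt, hv⟩
    · intro v _ w _ h; exact Fin.ext h
    · intro v hv
      simp only [Finset.mem_filter, Finset.mem_range] at hv
      exact ⟨⟨v, hv.1⟩, by simp [hv.2], rfl⟩
  rw [h]
  exact count_res a i hi n

/-! ### Arithmetic lemmas -/

lemma prod_Ico_ite (x y r a : ℕ) (h1 : 1 ≤ r) (h2 : r ≤ a) :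
    (∏ i ∈ Finset.Ico 1 a, if i < r then x else y) = x ^ (r-1) * y ^ (a-r) := by
  rw [← Finset.prod_Ico_consecutive _ h1 h2]
  congr 1
  · rw [Finset.prod_congr rfl (fun i hi => if_pos (Finset.mem_Ico.1 hi).2),
      Finset.prod_const, Nat.card_Ico]
  · rw [Finset.prod_congr rfl (fun i hi => if_neg (not_lt.2 (Finset.mem_Ico.1 hi).1)),
      Finset.prod_const, Nat.card_Ico]

lemma hq2_lem (n a : ℕ) (ha : 0 < a) (h2a : 2*a ≤ n) : 2 ≤ n / a :=
  (Nat.le_div_iff_mul_le ha).2 (by omega)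

lemma ceil_eq (n a : ℕ) (ha : 0 < a) (h0 : n % a ≠ 0) : (n + a - 1) / a = n / a + 1 := by
  have hq := Nat.div_add_mod n a
  have hr := Nat.mod_lt n ha
  have e2 : n + a - 1 = a * (n / a + 1) + (n % a - 1) := by
    have h5 : a * (n / a + 1) = a * (n / a) + a := by ring
    obtain ⟨m, hm⟩ : ∃ m, a * (n / a) = m := ⟨_, rfl⟩
    rw [hm] at hq h5
    rw [h5]
    omega
  rw [e2, Nat.mul_add_div ha, Nat.div_eq_of_lt (show n % a - 1 < a by omega), Nat.add_zero]

lemma pred_div_mod (n a : ℕ) (ha : 0 < a) (h0 : n % a ≠ 0) :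
    (n - 1) / a = n / a ∧ (n - 1) % a = n % a - 1 := by
  have hq := Nat.div_add_mod n a
  have hr := Nat.mod_lt n ha
  have e1 : n - 1 = a * (n / a) + (n % a - 1) := by
    obtain ⟨m, hm⟩ : ∃ m, a * (n / a) = m := ⟨_, rfl⟩
    rw [hm] at hq ⊢
    omega
  constructor
  · rw [e1, Nat.mul_add_div ha, Nat.div_eq_of_lt (show n % a - 1 < a by omega), Nat.add_zero]
  · rw [e1, Nat.mul_add_mod, Nat.mod_eq_of_lt (show n % a - 1 < a by omega)]

lemma pred_div_mod' (n a : ℕ) (ha : 0 < a) (han : a ≤ n) (h0 : n % a = 0) :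
    (n - 1) / a = n / a - 1 ∧ (n - 1) % a = a - 1 := by
  have hq := Nat.div_add_mod n a
  have hq1 : 1 ≤ n / a := (Nat.le_div_iff_mul_le ha).2 (by omega)
  have e1 : n - 1 = a * (n / a - 1) + (a - 1) := by
    have h5 : a * (n / a - 1) + a * 1 = a * (n / a) := by
      rw [← Nat.mul_add]; congr 1; omega
    obtain ⟨m, hm⟩ : ∃ m, a * (n / a - 1) = m := ⟨_, rfl⟩
    obtain ⟨m2, hm2⟩ : ∃ m2, a * (n / a) = m2 := ⟨_, rfl⟩
    rw [hm, hm2] at h5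
    rw [hm2] at hq
    rw [hm]
    omega
  constructor
  · rw [e1, Nat.mul_add_div ha, Nat.div_eq_of_lt (show a - 1 < a by omega), Nat.add_zero]
  · rw [e1, Nat.mul_add_mod, Nat.mod_eq_of_lt (show a - 1 < a by omega)]

lemma tFun_eq (n a : ℕ) (ha : 0 < a) (h2a : 2*a ≤ n) :
    tFun n a = if a ∣ n then (n/a - 1)^(a-1)
      else (n/a - 1)^(a - n%a) * ((n+a-1)/a - 1)^(n%a - 1) := by
  have hq := Nat.div_add_mod n a
  have hr := Nat.mod_lt n ha
  by_cases h0 : n % a = 0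
  · rw [if_pos ((Nat.dvd_iff_mod_eq_zero).2 h0)]
    unfold tFun
    rw [Finset.prod_congr rfl (fun i _ => show n / a + (if i < n % a then 1 else 0) - 1
        = n / a - 1 by generalize n / a = q; split_ifs <;> omega),
      Finset.prod_const, Nat.card_Ico]
  · rw [if_neg (fun hd => h0 ((Nat.dvd_iff_mod_eq_zero).1 hd)), ceil_eq n a ha h0]
    unfold tFun
    rw [Finset.prod_congr rfl (fun i _ => show n / a + (if i < n % a then 1 else 0) - 1
        = if i < n % a then n / a else n / a - 1 by generalize n / a = q; split_ifs <;> omega),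
      prod_Ico_ite _ _ _ _ (by omega) (by omega),
      Nat.add_sub_cancel, Nat.mul_comm]

lemma gfun_pred (n a : ℕ) (ha : 0 < a) (h2a : 2*a ≤ n) :
    gFun (n-1) a = (n/a + (if 0 < n%a then 1 else 0) - 1) *
      ∏ i ∈ Finset.Ico 1 a, (n/a + if i < n%a then 1 else 0) := by
  have hq := Nat.div_add_mod n a
  have hr := Nat.mod_lt n ha
  have hq2 : 2 ≤ n / a := hq2_lem n a ha h2a
  by_cases h0 : n % a = 0
  · obtain ⟨ediv, emod⟩ := pred_div_mod' n a ha (by omega) h0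
    have hprod : (∏ i ∈ Finset.Ico 1 a, (n/a + if i < n%a then 1 else 0))
        = (n/a) ^ (a - 1) := by
      rw [Finset.prod_congr rfl (fun i _ => show n / a + (if i < n % a then 1 else 0)
          = n / a by generalize n / a = q; split_ifs <;> omega),
        Finset.prod_const, Nat.card_Ico]
    rw [hprod, show n/a + (if 0 < n%a then 1 else 0) - 1 = n/a - 1 by
      generalize n / a = q; split_ifs <;> omega]
    unfold gFun
    rw [ediv, emod, show a - (a-1) = 1 by omega, pow_one]
    rcases Nat.eq_or_lt_of_le ha with h1 | h1
    · rw [← h1]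
      simp
    · have e2 : n - 1 + a - 1 = a * (n / a) + (a - 2) := by
        obtain ⟨m, hm⟩ : ∃ m, a * (n / a) = m := ⟨_, rfl⟩
        rw [hm] at hq ⊢
        omega
      rw [e2, Nat.mul_add_div ha, Nat.div_eq_of_lt (show a - 2 < a by omega), Nat.add_zero]
  · obtain ⟨ediv, emod⟩ := pred_div_mod n a ha h0
    have hprod : (∏ i ∈ Finset.Ico 1 a, (n/a + if i < n%a then 1 else 0))
        = (n/a + 1) ^ (n%a - 1) * (n/a) ^ (a - n%a) := by
      rw [Finset.prod_congr rfl (fun i _ => show n / a + (if i < n % a then 1 else 0)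
          = if i < n % a then n / a + 1 else n / a by
            generalize n / a = q; split_ifs <;> omega),
        prod_Ico_ite _ _ _ _ (by omega) (by omega)]
    have hX : ((n - 1 + a - 1) / a) ^ ((n-1) % a) = (n/a + 1) ^ (n%a - 1) := by
      rw [emod]
      rcases Nat.eq_or_lt_of_le (show 1 ≤ n % a by omega) with h1 | h1
      · rw [show n % a - 1 = 0 by omega, pow_zero, pow_zero]
      · have e2 : n - 1 + a - 1 = a * (n / a + 1) + (n % a - 2) := by
          have h5 : a * (n / a + 1) = a * (n / a) + a := by ring
          obtain ⟨m, hm⟩ : ∃ m, a * (n / a) = m := ⟨_, rfl⟩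
          rw [hm] at hq h5
          rw [h5]
          omega
        rw [e2, Nat.mul_add_div ha, Nat.div_eq_of_lt (show n % a - 2 < a by omega),
          Nat.add_zero]
    rw [hprod, show n/a + (if 0 < n%a then 1 else 0) - 1 = n/a by
      generalize n / a = q; split_ifs <;> omega]
    unfold gFun
    rw [hX, ediv, emod, show a - (n%a - 1) = (a - n%a) + 1 by omega, pow_succ]
    ring

lemma prod_fin_split (a : ℕ) (ha : 0 < a) (F : ℕ → ℕ) :
    ∏ i : Fin a, F i.val = F 0 * ∏ j ∈ Finset.Ico 1 a, F j := by
  rw [Fin.prod_univ_eq_prod_range F a, Finset.range_eq_Ico,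
    ← Finset.prod_Ico_consecutive F (Nat.zero_le 1) ha]
  congr 1
  rw [Nat.Ico_zero_eq_range, Finset.prod_range_one]

/-! ### Independence lemmas -/

lemma indep_card_le (n a : ℕ) (ha : 0 < a) (s : Finset (Fin n))
    (hs : IsIndepFinset (Fgraph n a) s) : s.card ≤ a := by
  have h := Finset.card_le_card_of_injOn (fun v : Fin n => v.val % a)
    (fun v _ => Finset.mem_range.2 (Nat.mod_lt _ ha)) (s := s) (t := Finset.range a) ?_
  · simpa using h
  · intro v hv w hw hvw
    by_contra hne
    exact hs (Finset.mem_coe.1 hv) (Finset.mem_coe.1 hw) hne ⟨hne, Or.inl hvw⟩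

lemma indepNum_eq (n a : ℕ) (ha : 0 < a) (h2a : 2*a ≤ n) :
    indepNumber (Fgraph n a) = a := by
  classical
  have hwit : ∃ s : Finset (Fin n), IsIndepFinset (Fgraph n a) s ∧ s.card = a := by
    refine ⟨Finset.image (fun i : Fin a => (⟨i.val + a, by omega⟩ : Fin n)) Finset.univ, ?_, ?_⟩
    · intro u hu v hv huv
      simp only [Finset.mem_image, Finset.mem_univ, true_and] at hu hv
      obtain ⟨i, rfl⟩ := hu
      obtain ⟨j, rfl⟩ := hv
      rintro ⟨-, h | h | h⟩
      · simp only at h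
        rw [Nat.add_mod_right, Nat.add_mod_right, Nat.mod_eq_of_lt i.isLt,
          Nat.mod_eq_of_lt j.isLt] at h
        exact huv (by simp [Fin.ext_iff, h])
      · simp only at h; omega
      · simp only at h; omega
    · rw [Finset.card_image_of_injective _ (fun i j hij => by
        simpa [Fin.ext_iff] using hij), Finset.card_univ, Fintype.card_fin]
  have hub : ∀ k ∈ {k | ∃ s : Finset (Fin n), IsIndepFinset (Fgraph n a) s ∧ s.card = k},
      k ≤ a := by
    rintro k ⟨s, h1, h2⟩
    exact h2 ▸ indep_card_le n a ha s h1
  have hmem : a ∈ {k | ∃ s : Finset (Fin n), IsIndepFinset (Fgraph n a) s ∧ s.card = k} := hwit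
  exact le_antisymm (csSup_le ⟨a, hmem⟩ hub) (le_csSup ⟨a, hub⟩ hmem)

lemma exists_rep (n a : ℕ) (ha : 0 < a) (s : Finset (Fin n))
    (hind : IsIndepFinset (Fgraph n a) s) (hcard : s.card = a) :
    ∃ f : Fin a → Fin n, (∀ i, f i ∈ s) ∧ (∀ i : Fin a, (f i).val % a = i.val) ∧
      s = Finset.image f Finset.univ := by
  classical
  have hinj : Set.InjOn (fun v : Fin n => (⟨v.val % a, Nat.mod_lt _ ha⟩ : Fin a)) ↑s := by
    intro v hv w hw hvw
    by_contra hne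
    exact hind (Finset.mem_coe.1 hv) (Finset.mem_coe.1 hw) hne
      ⟨hne, Or.inl (by simpa [Fin.ext_iff] using hvw)⟩
  have himg : s.image (fun v : Fin n => (⟨v.val % a, Nat.mod_lt _ ha⟩ : Fin a))
      = Finset.univ := by
    apply Finset.eq_univ_of_card
    rw [Finset.card_image_of_injOn hinj, hcard, Fintype.card_fin]
  have hsurj : ∀ i : Fin a, ∃ v, v ∈ s ∧ v.val % a = i.val := by
    intro i
    have hh : i ∈ s.image (fun v : Fin n => (⟨v.val % a, Nat.mod_lt _ ha⟩ : Fin a)) :=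
      himg ▸ Finset.mem_univ i
    obtain ⟨v, hv, hvi⟩ := Finset.mem_image.1 hh
    exact ⟨v, hv, congrArg Fin.val hvi⟩
  choose f hf1 hf2 using hsurj
  have hfinj : Function.Injective f := by
    intro i j hij
    apply Fin.ext
    rw [← hf2 i, ← hf2 j, hij]
  refine ⟨f, hf1, hf2, ?_⟩
  apply (Finset.eq_of_subset_of_card_le ?_ ?_).symm
  · intro v hv
    obtain ⟨i, _, rfl⟩ := Finset.mem_image.1 hv
    exact hf1 i
  · rw [hcard, Finset.card_image_of_injective _ hfinj, Finset.card_univ, Fintype.card_fin]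

/-! ### The clique-choice sets -/

def t0 (n a : ℕ) : Fin a → Finset (Fin n) := fun i =>
  Finset.univ.filter (fun v : Fin n => v.val % a = i.val ∧ v.val ≠ 0)

def t1 (n a : ℕ) : Fin a → Finset (Fin n) := fun i =>
  Finset.univ.filter (fun v : Fin n =>
    v.val % a = i.val ∧ (if i.val = 0 then v.val = 0 else a ≤ v.val))

lemma card_t0 (n a : ℕ) (ha : 0 < a) (han : a < n) (i : Fin a) :
    (t0 n a i).card = if i.val = 0
      then n / a + (if 0 < n % a then 1 else 0) - 1
      else n / a + (if i.val < n % a then 1 else 0) := by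
  classical
  have hb := card_classC n a ha i.val i.isLt
  have hsplit := Finset.card_filter_add_card_filter_not
    (s := (Finset.univ : Finset (Fin n)).filter (fun v => v.val % a = i.val))
    (p := fun v => v.val ≠ 0)
  have ht0 : t0 n a i = ((Finset.univ : Finset (Fin n)).filter
      (fun v => v.val % a = i.val)).filter (fun v => v.val ≠ 0) := by
    ext v
    simp [t0]
  by_cases h0 : i.val = 0
  · rw [if_pos h0]
    have hneg : ((Finset.univ : Finset (Fin n)).filter
        (fun v => v.val % a = i.val)).filter (fun v => ¬ v.val ≠ 0)
        = {(⟨0, by omega⟩ : Fin n)} := by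
      ext v
      simp only [Finset.mem_filter, Finset.mem_univ, true_and, not_not,
        Finset.mem_singleton, Fin.ext_iff]
      constructor
      · rintro ⟨-, h⟩; exact h
      · intro h; rw [h]; simp [h0]
    rw [hneg, Finset.card_singleton] at hsplit
    rw [ht0]
    rw [h0] at hb hsplit ⊢
    generalize hq : n / a = q at hb ⊢
    split_ifs at hb ⊢ <;> omega
  · rw [if_neg h0]
    have hneg : ((Finset.univ : Finset (Fin n)).filter
        (fun v => v.val % a = i.val)).filter (fun v => ¬ v.val ≠ 0) = ∅ := by
      ext v
      simp only [Finset.mem_filter, Finset.mem_univ, true_and, not_not,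
        Finset.notMem_empty, iff_false, not_and]
      intro h1 h2
      rw [h2] at h1
      simp at h1
      exact h0 h1.symm
    rw [hneg, Finset.card_empty] at hsplit
    rw [ht0]
    generalize hq : n / a = q at hb ⊢
    split_ifs at hb ⊢ <;> omega

lemma card_t1 (n a : ℕ) (ha : 0 < a) (han : a < n) (i : Fin a) :
    (t1 n a i).card = if i.val = 0 then 1
      else n / a + (if i.val < n % a then 1 else 0) - 1 := by
  classical
  have hb := card_classC n a ha i.val i.isLt
  by_cases h0 : i.val = 0
  · rw [if_pos h0]
    have h1 : t1 n a i = {(⟨0, by omega⟩ : Fin n)} := by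
      ext v
      simp only [t1, Finset.mem_filter, Finset.mem_univ, true_and, if_pos h0,
        Finset.mem_singleton, Fin.ext_iff]
      constructor
      · rintro ⟨-, h⟩; exact h
      · intro h; rw [h]; simp [h0]
    rw [h1, Finset.card_singleton]
  · rw [if_neg h0]
    have hsplit := Finset.card_filter_add_card_filter_not
      (s := (Finset.univ : Finset (Fin n)).filter (fun v => v.val % a = i.val))
      (p := fun v => a ≤ v.val)
    have ht1 : t1 n a i = ((Finset.univ : Finset (Fin n)).filter
        (fun v => v.val % a = i.val)).filter (fun v => a ≤ v.val) := by
      ext v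
      simp [t1, h0]
    have hneg : ((Finset.univ : Finset (Fin n)).filter
        (fun v => v.val % a = i.val)).filter (fun v => ¬ a ≤ v.val)
        = {(⟨i.val, by omega⟩ : Fin n)} := by
      ext v
      simp only [Finset.mem_filter, Finset.mem_univ, true_and, not_le,
        Finset.mem_singleton, Fin.ext_iff]
      constructor
      · rintro ⟨h1, h2⟩
        rw [← h1, Nat.mod_eq_of_lt h2]
      · intro h
        rw [h]
        exact ⟨Nat.mod_eq_of_lt i.isLt, i.isLt⟩
    rw [hneg, Finset.card_singleton] at hsplit
    rw [ht1]
    generalize hq : n / a = q at hb ⊢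
    split_ifs at hb ⊢ <;> omega

/-! ### Characterizations of maximum independent sets -/

lemma charP0 (n a : ℕ) (ha : 0 < a) (x₀ : Fin n) (hx₀ : x₀.val = 0) (s : Finset (Fin n)) :
    (IsIndepFinset (Fgraph n a) s ∧ s.card = a ∧ x₀ ∉ s)
      ↔ ∃ f ∈ Fintype.piFinset (t0 n a), s = Finset.image f Finset.univ := by
  constructor
  · rintro ⟨hind, hcard, hx⟩
    obtain ⟨f, hf1, hf2, hf3⟩ := exists_rep n a ha s hind hcard
    refine ⟨f, Fintype.mem_piFinset.2 fun i => ?_, hf3⟩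
    simp only [t0, Finset.mem_filter, Finset.mem_univ, true_and]
    refine ⟨hf2 i, fun h0 => hx ?_⟩
    have h1 : f i = x₀ := Fin.ext (by rw [h0, hx₀])
    exact h1 ▸ hf1 i
  · rintro ⟨f, hf, rfl⟩
    have hmem : ∀ i, (f i).val % a = i.val ∧ (f i).val ≠ 0 := by
      intro i
      have hh := Fintype.mem_piFinset.1 hf i
      simpa [t0] using hh
    have hfinj : Function.Injective f := by
      intro i j hij
      apply Fin.ext
      rw [← (hmem i).1, ← (hmem j).1, hij]
    refine ⟨?_, ?_, ?_⟩
    · intro u hu v hv huv hadj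
      obtain ⟨i, -, rfl⟩ := Finset.mem_image.1 hu
      obtain ⟨j, -, rfl⟩ := Finset.mem_image.1 hv
      rcases hadj.2 with h | h | h
      · rw [(hmem i).1, (hmem j).1] at h
        exact huv (by rw [show i = j from Fin.ext h])
      · exact (hmem i).2 h.1
      · exact (hmem j).2 h.1
    · rw [Finset.card_image_of_injective _ hfinj, Finset.card_univ, Fintype.card_fin]
    · intro hx
      obtain ⟨i, -, hi⟩ := Finset.mem_image.1 hx
      exact (hmem i).2 (by rw [hi, hx₀])

lemma charP1 (n a : ℕ) (ha : 0 < a) (x₀ : Fin n) (hx₀ : x₀.val = 0) (s : Finset (Fin n)) :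
    (IsIndepFinset (Fgraph n a) s ∧ s.card = a ∧ x₀ ∈ s)
      ↔ ∃ f ∈ Fintype.piFinset (t1 n a), s = Finset.image f Finset.univ := by
  constructor
  · rintro ⟨hind, hcard, hx⟩
    obtain ⟨f, hf1, hf2, hf3⟩ := exists_rep n a ha s hind hcard
    refine ⟨f, Fintype.mem_piFinset.2 fun i => ?_, hf3⟩
    simp only [t1, Finset.mem_filter, Finset.mem_univ, true_and]
    refine ⟨hf2 i, ?_⟩
    by_cases h0 : i.val = 0
    · rw [if_pos h0]
      by_contra hne0
      have hne : f i ≠ x₀ := fun h => hne0 (by rw [h, hx₀])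
      exact hind (hf1 i) hx hne
        ⟨hne, Or.inl (by rw [hf2 i, h0, hx₀, Nat.zero_mod])⟩
    · rw [if_neg h0]
      by_contra hlt
      push_neg at hlt
      have hne : x₀ ≠ f i := by
        intro h
        apply h0
        rw [← hf2 i, ← h, hx₀, Nat.zero_mod]
      exact hind hx (hf1 i) hne ⟨hne, Or.inr (Or.inl ⟨hx₀, hlt⟩)⟩
  · rintro ⟨f, hf, rfl⟩
    have hmem : ∀ i : Fin a, (f i).val % a = i.val ∧
        (if i.val = 0 then (f i).val = 0 else a ≤ (f i).val) := by
      intro i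
      have hh := Fintype.mem_piFinset.1 hf i
      simpa [t1] using hh
    have hfinj : Function.Injective f := by
      intro i j hij
      apply Fin.ext
      rw [← (hmem i).1, ← (hmem j).1, hij]
    refine ⟨?_, ?_, ?_⟩
    · intro u hu v hv huv hadj
      obtain ⟨i, -, rfl⟩ := Finset.mem_image.1 hu
      obtain ⟨j, -, rfl⟩ := Finset.mem_image.1 hv
      rcases hadj.2 with h | h | h
      · rw [(hmem i).1, (hmem j).1] at h
        exact huv (by rw [show i = j from Fin.ext h])
      · have hj0 : j.val ≠ 0 := by
          intro hj0
          have hh := (hmem j).2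
          rw [if_pos hj0] at hh
          exact huv (Fin.ext (by rw [h.1, hh]))
        have hh := (hmem j).2
        rw [if_neg hj0] at hh
        omega
      · have hi0 : i.val ≠ 0 := by
          intro hi0
          have hh := (hmem i).2
          rw [if_pos hi0] at hh
          exact huv (Fin.ext (by rw [h.1, hh]))
        have hh := (hmem i).2
        rw [if_neg hi0] at hh
        omega
    · rw [Finset.card_image_of_injective _ hfinj, Finset.card_univ, Fintype.card_fin]
    · have h0a : (0 : ℕ) < a := ha
      have hh := (hmem ⟨0, h0a⟩).2
      rw [if_pos rfl] at hh
      have hfx : f ⟨0, h0a⟩ = x₀ := Fin.ext (by rw [hh, hx₀])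
      rw [← hfx]
      exact Finset.mem_image_of_mem f (Finset.mem_univ _)

lemma card_pi (n a : ℕ) (t : Fin a → Finset (Fin n))
    (ht : ∀ i : Fin a, ∀ v ∈ t i, v.val % a = i.val)
    (P : Finset (Fin n) → Prop)
    (hP : ∀ s : Finset (Fin n), (IsIndepFinset (Fgraph n a) s ∧ s.card = a ∧ P s)
        ↔ ∃ f ∈ Fintype.piFinset t, s = Finset.image f Finset.univ) :
    {s : Finset (Fin n) | IsIndepFinset (Fgraph n a) s ∧ s.card = a ∧ P s}.ncard
      = ∏ i : Fin a, (t i).card := by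
  classical
  have hset : {s : Finset (Fin n) | IsIndepFinset (Fgraph n a) s ∧ s.card = a ∧ P s}
      = ↑((Fintype.piFinset t).image (fun f => Finset.image f Finset.univ)) := by
    ext s
    simp only [Set.mem_setOf_eq, Finset.coe_image, Set.mem_image, Finset.mem_coe]
    rw [hP s]
    constructor
    · rintro ⟨f, hf, rfl⟩; exact ⟨f, hf, rfl⟩
    · rintro ⟨f, hf, rfl⟩; exact ⟨f, hf, rfl⟩
  rw [hset, Set.ncard_coe_finset, ← Fintype.card_piFinset]
  apply Finset.card_image_of_injOn
  intro f hf g hg h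
  simp only [Finset.mem_coe] at hf hg
  funext i
  have hfi : f i ∈ Finset.image g Finset.univ := by
    have hh := Finset.mem_image_of_mem f (Finset.mem_univ i)
    simpa [← h] using hh
  obtain ⟨j, -, hj⟩ := Finset.mem_image.1 hfi
  have hji : j = i := by
    apply Fin.ext
    rw [← ht j _ (Fintype.mem_piFinset.1 hg j), hj, ht i _ (Fintype.mem_piFinset.1 hf i)]
  rw [hji] at hj
  exact hj.symm

/-! ### Connectivity and isomorphism -/

lemma fgraph_connected (n a : ℕ) (ha : 0 < a) (han : a < n) (x₀ : Fin n)
    (hx₀ : x₀.val = 0) : (Fgraph n a).Connected := by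
  have hreach0 : ∀ v : Fin n, v.val < a → (Fgraph n a).Reachable v x₀ := by
    intro v hv
    by_cases h0 : v.val = 0
    · have hvx : v = x₀ := Fin.ext (by rw [h0, hx₀])
      rw [hvx]
    · exact SimpleGraph.Adj.reachable
        ⟨fun h => h0 (by rw [h, hx₀]), Or.inr (Or.inr ⟨hx₀, hv⟩)⟩
  have hreach : ∀ v : Fin n, (Fgraph n a).Reachable v x₀ := by
    intro v
    by_cases hv : v.val < a
    · exact hreach0 v hv
    · push_neg at hv
      have hmlt : v.val % a < a := Nat.mod_lt _ ha
      have hadj : (Fgraph n a).Adj v ⟨v.val % a, by omega⟩ := by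
        refine ⟨fun h => ?_, Or.inl ?_⟩
        · have h2 := congrArg Fin.val h
          simp only at h2
          omega
        · simp only
          rw [Nat.mod_eq_of_lt hmlt]
      exact (SimpleGraph.Adj.reachable hadj).trans (hreach0 _ hmlt)
  haveI : Nonempty (Fin n) := ⟨x₀⟩
  exact ⟨fun u v => (hreach u).trans (hreach v).symm⟩

lemma mod_pred_iff (a x y : ℕ) (hx : 1 ≤ x) (hy : 1 ≤ y) :
    x % a = y % a ↔ (x - 1) % a = (y - 1) % a := by
  constructor
  · intro h
    have h2 : (x - 1) + 1 ≡ (y - 1) + 1 [MOD a] := by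
      rw [Nat.sub_add_cancel hx, Nat.sub_add_cancel hy]; exact h
    exact Nat.ModEq.add_right_cancel' 1 h2
  · intro h
    have h2 := Nat.ModEq.add_right 1 h
    rwa [Nat.sub_add_cancel hx, Nat.sub_add_cancel hy] at h2

lemma fgraph_iso (n a : ℕ) (ha : 0 < a) (han : a < n) (x₀ : Fin n) (hx₀ : x₀.val = 0) :
    Nonempty (((Fgraph n a).induce ({x₀}ᶜ : Set (Fin n))) ≃g Ggraph (n - 1) a) := by
  have hvne : ∀ v : ({x₀}ᶜ : Set (Fin n)), (v : Fin n).val ≠ 0 := by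
    rintro ⟨v, hv⟩ h
    exact hv (by simp only [Set.mem_singleton_iff]; exact Fin.ext (by rw [h, hx₀]))
  refine ⟨⟨⟨fun v => ⟨(v : Fin n).val - 1,
      by have h1 := hvne v; have h2 := (v : Fin n).isLt; omega⟩,
    fun w => ⟨⟨w.val + 1, by have := w.isLt; omega⟩, by
      simp only [Set.mem_compl_iff, Set.mem_singleton_iff]
      intro h
      have h2 := congrArg Fin.val h
      simp only [hx₀] at h2
      omega⟩,
    ?_, ?_⟩, ?_⟩⟩
  · rintro ⟨v, hv⟩
    have h1 : (v : Fin n).val ≠ 0 := hvne ⟨v, hv⟩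
    apply Subtype.ext
    apply Fin.ext
    simp only
    omega
  · intro w
    apply Fin.ext
    simp only
    omega
  · rintro ⟨u, hu⟩ ⟨v, hv⟩
    have h1 : u.val ≠ 0 := hvne ⟨u, hu⟩
    have h2 : v.val ≠ 0 := hvne ⟨v, hv⟩
    simp only [Equiv.coe_fn_mk, SimpleGraph.comap_adj, Function.Embedding.coe_subtype]
    show ((⟨u.val - 1, _⟩ : Fin (n-1)) ≠ ⟨v.val - 1, _⟩ ∧ (u.val - 1) % a = (v.val - 1) % a)
      ↔ (u ≠ v ∧ (u.val % a = v.val % a ∨ (u.val = 0 ∧ v.val < a) ∨ (v.val = 0 ∧ u.val < a)))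
    constructor
    · rintro ⟨hne, hmod⟩
      refine ⟨fun h => hne ?_, Or.inl ((mod_pred_iff a u.val v.val (by omega) (by omega)).2 hmod)⟩
      have h3 := congrArg Fin.val h
      exact Fin.ext (by simp only; omega)
    · rintro ⟨hne, h⟩
      have hmod : u.val % a = v.val % a := by
        rcases h with h | h | h
        · exact h
        · exact absurd h.1 h1
        · exact absurd h.1 h2
      refine ⟨fun h => hne ?_, (mod_pred_iff a u.val v.val (by omega) (by omega)).1 hmod⟩
      have h3 := congrArg Fin.val h
      simp only at h3
      exact Fin.ext (by omega)

/-! ### Main theorem -/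

theorem Fgraph_connected_indepNumber_numMaxIndep (n a : ℕ) (ha0 : 0 < a) (han : a < n)
    (h2a : 2 * a ≤ n) (x₀ : Fin n) (hx₀ : x₀.val = 0) :
    (Fgraph n a).Connected ∧
      indepNumber (Fgraph n a) = a ∧
      Nonempty (((Fgraph n a).induce ({x₀}ᶜ : Set (Fin n))) ≃g Ggraph (n - 1) a) ∧
      numMaxIndep (Fgraph n a) = fFun n a ∧
      fFun n a = gFun (n - 1) a +
        (if a ∣ n then (n / a - 1) ^ (a - 1)
          else (n / a - 1) ^ (a - n % a) * ((n + a - 1) / a - 1) ^ (n % a - 1)) := by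
  classical
  refine ⟨fgraph_connected n a ha0 han x₀ hx₀, indepNum_eq n a ha0 (by omega),
    fgraph_iso n a ha0 han x₀ hx₀, ?_, ?_⟩
  · -- the count
    have ht0 : ∀ i : Fin a, ∀ v ∈ t0 n a i, v.val % a = i.val := by
      intro i v hv
      exact ((Finset.mem_filter.1 hv).2).1
    have ht1 : ∀ i : Fin a, ∀ v ∈ t1 n a i, v.val % a = i.val := by
      intro i v hv
      exact ((Finset.mem_filter.1 hv).2).1
    have prod_t0eq : ∏ i : Fin a, (t0 n a i).card = gFun (n-1) a := by
      have h1 : ∏ i : Fin a, (t0 n a i).card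
          = ∏ i : Fin a, (fun j : ℕ => if j = 0
              then n / a + (if 0 < n % a then 1 else 0) - 1
              else n / a + (if j < n % a then 1 else 0)) i.val :=
        Finset.prod_congr rfl (fun i _ => card_t0 n a ha0 han i)
      rw [h1, prod_fin_split a ha0 (fun j : ℕ => if j = 0
              then n / a + (if 0 < n % a then 1 else 0) - 1
              else n / a + (if j < n % a then 1 else 0))]
      show (if (0:ℕ) = 0 then n / a + (if 0 < n % a then 1 else 0) - 1
          else n / a + (if (0:ℕ) < n % a then 1 else 0))
        * (∏ j ∈ Finset.Ico 1 a, if j = 0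
            then n / a + (if 0 < n % a then 1 else 0) - 1
            else n / a + (if j < n % a then 1 else 0)) = gFun (n-1) a
      rw [if_pos rfl,
        Finset.prod_congr rfl (fun j hj => if_neg (by
          have := (Finset.mem_Ico.1 hj).1; omega))]
      exact (gfun_pred n a ha0 h2a).symm
    have prod_t1eq : ∏ i : Fin a, (t1 n a i).card = tFun n a := by
      have h1 : ∏ i : Fin a, (t1 n a i).card
          = ∏ i : Fin a, (fun j : ℕ => if j = 0 then 1
              else n / a + (if j < n % a then 1 else 0) - 1) i.val :=
        Finset.prod_congr rfl (fun i _ => card_t1 n a ha0 han i)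
      rw [h1, prod_fin_split a ha0 (fun j : ℕ => if j = 0 then 1
              else n / a + (if j < n % a then 1 else 0) - 1)]
      show (if (0:ℕ) = 0 then 1 else n / a + (if (0:ℕ) < n % a then 1 else 0) - 1)
        * (∏ j ∈ Finset.Ico 1 a, if j = 0 then 1
            else n / a + (if j < n % a then 1 else 0) - 1) = tFun n a
      rw [if_pos rfl, one_mul,
        Finset.prod_congr rfl (fun j hj => if_neg (by
          have := (Finset.mem_Ico.1 hj).1; omega))]
      rfl
    unfold numMaxIndep
    simp only [indepNum_eq n a ha0 (by omega : 2*a ≤ n)]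
    have hsplit : {s : Finset (Fin n) | IsIndepFinset (Fgraph n a) s ∧ s.card = a} =
        {s : Finset (Fin n) | IsIndepFinset (Fgraph n a) s ∧ s.card = a ∧ x₀ ∉ s} ∪
        {s : Finset (Fin n) | IsIndepFinset (Fgraph n a) s ∧ s.card = a ∧ x₀ ∈ s} := by
      ext s
      simp only [Set.mem_setOf_eq, Set.mem_union]
      tauto
    have hdisj : Disjoint
        {s : Finset (Fin n) | IsIndepFinset (Fgraph n a) s ∧ s.card = a ∧ x₀ ∉ s}
        {s : Finset (Fin n) | IsIndepFinset (Fgraph n a) s ∧ s.card = a ∧ x₀ ∈ s} := by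
      rw [Set.disjoint_left]
      rintro s ⟨-, -, h⟩ ⟨-, -, h'⟩
      exact h h'
    rw [hsplit, Set.ncard_union_eq hdisj (Set.toFinite _) (Set.toFinite _),
      card_pi n a (t0 n a) ht0 _ (fun s => charP0 n a ha0 x₀ hx₀ s),
      card_pi n a (t1 n a) ht1 _ (fun s => charP1 n a ha0 x₀ hx₀ s),
      prod_t0eq, prod_t1eq]
    rfl
  · unfold fFun
    rw [tFun_eq n a ha0 h2a]
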